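/- Let u be a v-minimal word of a synchronizing automaton 𝒜 and i ∈ supp(u). If a word w u-represents an element g ∈ ℐ_i ∖ {0_i}, then rk(w) = Rnk(ℐ_i). -/

import Mathlib

open scoped BigOperators

set_option synthInstance.maxHeartbeats 1000000
set_option maxHeartbeats 1000000

noncomputable section

/-- Action of a word on a state: `q · u`. -/
def actW {Q A : Type*} (δ : Q → A → Q) (q : Q) (u : List A) : Q :=
  u.foldl δ q

/-- The image `Q · u` of the full state set under a word. -/
def imageSet {Q A : Type*} [Fintype Q] [DecidableEq Q] (δ : Q → A → Q) (u : List A) :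
    Finset Q :=
  Finset.image (fun q => actW δ q u) Finset.univ

/-- The rank `rk(u) = |Q · u|` of a word. -/
def wordRank {Q A : Type*} [Fintype Q] [DecidableEq Q] (δ : Q → A → Q) (u : List A) : ℕ :=
  (imageSet δ u).card

/-- A word is reset (synchronizing) if `|Q · u| = 1`. -/
def IsReset {Q A : Type*} [Fintype Q] [DecidableEq Q] (δ : Q → A → Q) (u : List A) : Prop :=
  wordRank δ u = 1

/-- The automaton is synchronizing if it admits a reset word. -/
def IsSynchronizing {Q A : Type*} [Fintype Q] [DecidableEq Q] (δ : Q → A → Q) : Prop :=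
  ∃ u : List A, IsReset δ u

/-- `Syn(𝒜)`, the set of reset words. -/
def SynWords {Q A : Type*} [Fintype Q] [DecidableEq Q] (δ : Q → A → Q) : Set (List A) :=
  {u | IsReset δ u}

/-- The hyperplane `w⊥ = {v ∈ ℂQ : ∑ q, v q = 0}`. -/
def Wperp (Q : Type*) [Fintype Q] : Submodule ℂ (Q → ℂ) :=
  LinearMap.ker (∑ q : Q, (LinearMap.proj q : (Q → ℂ) →ₗ[ℂ] ℂ))

theorem mem_Wperp {Q : Type*} [Fintype Q] (v : Q → ℂ) :
    v ∈ Wperp Q ↔ ∑ q : Q, v q = 0 := by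
  simp [Wperp, LinearMap.mem_ker, LinearMap.sum_apply]

/-- The (right) action of a word on row vectors `v ↦ v·π(u)`. -/
def piLin {Q A : Type*} [Fintype Q] [DecidableEq Q] (δ : Q → A → Q) (u : List A) :
    (Q → ℂ) →ₗ[ℂ] (Q → ℂ) where
  toFun v := fun p => ∑ q ∈ Finset.univ.filter (fun q => actW δ q u = p), v q
  map_add' := by
    intro a b; funext p; simp [Finset.sum_add_distrib]
  map_smul' := by
    intro c v; funext p; simp [Finset.mul_sum]

theorem piLin_mem {Q A : Type*} [Fintype Q] [DecidableEq Q] (δ : Q → A → Q) (u : List A) :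
    ∀ v ∈ Wperp Q, piLin δ u v ∈ Wperp Q := by
  intro v hv
  rw [mem_Wperp] at hv ⊢
  have h := Finset.sum_fiberwise (Finset.univ : Finset Q) (fun q => actW δ q u) v
  calc ∑ p : Q, piLin δ u v p
      = ∑ p : Q, ∑ q ∈ Finset.univ.filter (fun q => actW δ q u = p), v q := rfl
    _ = ∑ q : Q, v q := h
    _ = 0 := hv

/-- The endomorphism of `w⊥` induced by a word. -/
def rhoEnd {Q A : Type*} [Fintype Q] [DecidableEq Q] (δ : Q → A → Q) (u : List A) :
    Module.End ℂ (Wperp Q) :=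
  (piLin δ u).restrict (piLin_mem δ u)

/-- The representation `ρ : Σ* → End(w⊥)`; we record it in the multiplicative opposite so
that `ρ (u ++ v) = ρ u * ρ v` (the paper's right-action convention). -/
def rho {Q A : Type*} [Fintype Q] [DecidableEq Q] (δ : Q → A → Q) (u : List A) :
    (Module.End ℂ (Wperp Q))ᵐᵒᵖ :=
  MulOpposite.op (rhoEnd δ u)

/-- `ℛ`, the ℂ-subalgebra generated by `ρ(Σ*)`. -/
def Ralg {Q A : Type*} [Fintype Q] [DecidableEq Q] (δ : Q → A → Q) :
    Subalgebra ℂ (Module.End ℂ (Wperp Q))ᵐᵒᵖ :=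
  Algebra.adjoin ℂ (Set.range (rho δ))

/-- `ρ(u)` seen as an element of `ℛ`. -/
def rhoR {Q A : Type*} [Fintype Q] [DecidableEq Q] (δ : Q → A → Q) (u : List A) :
    Ralg δ :=
  ⟨rho δ u, Algebra.subset_adjoin (Set.mem_range_self u)⟩

/-- The Jacobson radical `Rad(ℛ)` of `ℛ`, realised as a subset of the ambient algebra via
the standard characterisation: `x ∈ Rad(ℛ)` iff `x ∈ ℛ` and for every `y ∈ ℛ` the element
`1 - y * x` is left-invertible in `ℛ`. -/
def RadSet {Q A : Type*} [Fintype Q] [DecidableEq Q] (δ : Q → A → Q) :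
    Set (Module.End ℂ (Wperp Q))ᵐᵒᵖ :=
  {x | x ∈ Ralg δ ∧ ∀ y ∈ Ralg δ, ∃ z ∈ Ralg δ, z * (1 - y * x) = 1}

/-- `Rad(𝒜)`: the set of radical words, i.e. words `u` with `ρ(u) ∈ Rad(ℛ)`. -/
def RadWords {Q A : Type*} [Fintype Q] [DecidableEq Q] (δ : Q → A → Q) : Set (List A) :=
  {u | rho δ u ∈ RadSet δ}

/-- The automaton is semisimple when `Rad(𝒜) = Syn(𝒜)`. -/
def IsSemisimple {Q A : Type*} [Fintype Q] [DecidableEq Q] (δ : Q → A → Q) : Prop :=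
  RadWords δ = SynWords δ

/-- The `t`-packing number `D(t,r,n)`: the maximum size of a family of `r`-subsets of an
`n`-set in which every `t`-subset is contained in at most one member. -/
def packingNumber (t r n : ℕ) : ℕ :=
  sSup {m | ∃ F : Finset (Finset (Fin n)), F.card = m ∧ (∀ S ∈ F, S.card = r) ∧
    ∀ T : Finset (Fin n), T.card = t → (F.filter fun S => T ⊆ S).card ≤ 1}

/-- The former-rank `Fr(𝒜)`: the least rank of a non-reset word. -/
def formerRank {Q A : Type*} [Fintype Q] [DecidableEq Q] (δ : Q → A → Q) : ℕ :=
  sInf {m | ∃ u : List A, ¬ IsReset δ u ∧ wordRank δ u = m}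

/-- `Fs(𝒜)`: the set of former-synchronizing words. -/
def Fs {Q A : Type*} [Fintype Q] [DecidableEq Q] (δ : Q → A → Q) : Set (List A) :=
  {u | wordRank δ u = formerRank δ}

/-- `θ_i(u)`: the image of `ρ(u)` in the `i`-th Wedderburn–Artin matrix component, where
`e : ℛ → ∏ i, M_{n_i}(ℂ)` is the quotient map `ψ` followed by the fixed isomorphism. -/
def theta {Q A : Type*} [Fintype Q] [DecidableEq Q] (δ : Q → A → Q) {k : ℕ} {nn : Fin k → ℕ}
    (e : Ralg δ →ₐ[ℂ] ∀ i : Fin k, Matrix (Fin (nn i)) (Fin (nn i)) ℂ)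
    (u : List A) (i : Fin k) : Matrix (Fin (nn i)) (Fin (nn i)) ℂ :=
  e (rhoR δ u) i

/-- `supp(v) = {i : θ_i(v) ≠ 0}`. -/
def suppW {Q A : Type*} [Fintype Q] [DecidableEq Q] (δ : Q → A → Q) {k : ℕ} {nn : Fin k → ℕ}
    (e : Ralg δ →ₐ[ℂ] ∀ i : Fin k, Matrix (Fin (nn i)) (Fin (nn i)) ℂ)
    (v : List A) : Set (Fin k) :=
  {i | theta δ e v i ≠ 0}

/-- `u ∈ Σ* v Σ*`, i.e. `v` is a factor of `u`. -/
def InFactor {A : Type*} (v u : List A) : Prop :=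
  ∃ a b : List A, u = a ++ v ++ b

/-- `u` is a `v`-minimal word: `u ∈ Σ*vΣ*`, `supp(u)` is nonempty, and `supp(u)` is minimal
among the nonempty supports of words in `Σ*vΣ*`. -/
def IsVMinimal {Q A : Type*} [Fintype Q] [DecidableEq Q] (δ : Q → A → Q) {k : ℕ}
    {nn : Fin k → ℕ}
    (e : Ralg δ →ₐ[ℂ] ∀ i : Fin k, Matrix (Fin (nn i)) (Fin (nn i)) ℂ)
    (v u : List A) : Prop :=
  InFactor v u ∧ (suppW δ e u).Nonempty ∧
    ∀ z : List A, InFactor v z → suppW δ e z ⊆ suppW δ e u →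
      suppW δ e z = ∅ ∨ suppW δ e z = suppW δ e u

/-- The `i`-th factor monoid `ℳ_i = θ_i(Σ*)`. -/
def factorMonoid {Q A : Type*} [Fintype Q] [DecidableEq Q] (δ : Q → A → Q) {k : ℕ}
    {nn : Fin k → ℕ}
    (e : Ralg δ →ₐ[ℂ] ∀ i : Fin k, Matrix (Fin (nn i)) (Fin (nn i)) ℂ)
    (i : Fin k) : Set (Matrix (Fin (nn i)) (Fin (nn i)) ℂ) :=
  Set.range fun u : List A => theta δ e u i

/-- A two-sided ideal of the (sub)monoid `M`. -/
def IsSetIdeal {X : Type*} [Mul X] (M I : Set X) : Prop :=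
  I ⊆ M ∧ ∀ a ∈ M, ∀ x ∈ I, a * x ∈ I ∧ x * a ∈ I

/-- `I` is a `0`-minimal (two-sided) ideal of the monoid `M`. -/
def IsZeroMinimalIdeal {X : Type*} [Mul X] [Zero X] (M I : Set X) : Prop :=
  IsSetIdeal M I ∧ (0 : X) ∈ I ∧ I ≠ {0} ∧
    ∀ J : Set X, IsSetIdeal M J → (0 : X) ∈ J → J ⊆ I → J ≠ {0} → J = I

/-- `Rnk_i(g) = min {rk(u) : θ_i(u) = g}`. -/
def rnkElt {Q A : Type*} [Fintype Q] [DecidableEq Q] (δ : Q → A → Q) {k : ℕ}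
    {nn : Fin k → ℕ}
    (e : Ralg δ →ₐ[ℂ] ∀ i : Fin k, Matrix (Fin (nn i)) (Fin (nn i)) ℂ)
    (i : Fin k) (g : Matrix (Fin (nn i)) (Fin (nn i)) ℂ) : ℕ :=
  sInf {m | ∃ u : List A, theta δ e u i = g ∧ wordRank δ u = m}

/-- `Rnk(ℐ_i) = min {Rnk_i(g) : g ∈ ℐ_i ∖ {0}}`. -/
def rnkIdeal {Q A : Type*} [Fintype Q] [DecidableEq Q] (δ : Q → A → Q) {k : ℕ}
    {nn : Fin k → ℕ}
    (e : Ralg δ →ₐ[ℂ] ∀ i : Fin k, Matrix (Fin (nn i)) (Fin (nn i)) ℂ)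
    (i : Fin k) (I : Set (Matrix (Fin (nn i)) (Fin (nn i)) ℂ)) : ℕ :=
  sInf {m | ∃ g ∈ I, g ≠ 0 ∧ rnkElt δ e i g = m}

/-- `w` `u`-represents `g`: `w ∈ Σ*uΣ*`, `θ_i(w) = g`, and either `g = 0` or `rk(w)` is
minimum among all words with the first two properties. -/
def URepresents {Q A : Type*} [Fintype Q] [DecidableEq Q] (δ : Q → A → Q) {k : ℕ}
    {nn : Fin k → ℕ}
    (e : Ralg δ →ₐ[ℂ] ∀ i : Fin k, Matrix (Fin (nn i)) (Fin (nn i)) ℂ)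
    (u : List A) (i : Fin k) (w : List A) (g : Matrix (Fin (nn i)) (Fin (nn i)) ℂ) : Prop :=
  InFactor u w ∧ theta δ e w i = g ∧
    (g = 0 ∨ ∀ w' : List A, InFactor u w' → theta δ e w' i = g → wordRank δ w ≤ wordRank δ w')

/-- The relation `σ_i` on `ℐ_i`. -/
def sigmaRel {Q A : Type*} [Fintype Q] [DecidableEq Q] (δ : Q → A → Q) {k : ℕ}
    {nn : Fin k → ℕ}
    (e : Ralg δ →ₐ[ℂ] ∀ i : Fin k, Matrix (Fin (nn i)) (Fin (nn i)) ℂ)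
    (i : Fin k) (u : List A)
    (g f : Matrix (Fin (nn i)) (Fin (nn i)) ℂ) : Prop :=
  g = f ∨ ∃ w₁ w₂ : List A, URepresents δ e u i w₁ g ∧ URepresents δ e u i w₂ f ∧
    1 < (imageSet δ w₁ ∩ imageSet δ w₂).card

/-- `T ⊆ [1,k]` is a core. -/
def IsCore {Q A : Type*} [Fintype Q] [DecidableEq Q] (δ : Q → A → Q) {k : ℕ}
    {nn : Fin k → ℕ}
    (e : Ralg δ →ₐ[ℂ] ∀ i : Fin k, Matrix (Fin (nn i)) (Fin (nn i)) ℂ)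
    (T : Set (Fin k)) : Prop :=
  ∀ x : List A, (∀ i ∈ T, theta δ e x i = 0) → ∀ i : Fin k, theta δ e x i = 0

/-- A minimal core. -/
def IsMinimalCore {Q A : Type*} [Fintype Q] [DecidableEq Q] (δ : Q → A → Q) {k : ℕ}
    {nn : Fin k → ℕ}
    (e : Ralg δ →ₐ[ℂ] ∀ i : Fin k, Matrix (Fin (nn i)) (Fin (nn i)) ℂ)
    (T : Set (Fin k)) : Prop :=
  IsCore δ e T ∧ ∀ T' : Set (Fin k), T' ⊆ T → IsCore δ e T' → T' = T

/-- An automaton congruence. -/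
def IsCongruence {Q A : Type*} (δ : Q → A → Q) (σ : Q → Q → Prop) : Prop :=
  Equivalence σ ∧ ∀ q p : Q, σ q p → ∀ u : List A, σ (actW δ q u) (actW δ p u)

/-- A simple automaton: the only congruences are the identity and the universal relation. -/
def IsSimple {Q A : Type*} (δ : Q → A → Q) : Prop :=
  ∀ σ : Q → Q → Prop, IsCongruence δ σ → σ = Eq ∨ σ = fun _ _ => True


section Stmt13Aux

variable {Q A : Type*} [Fintype Q] [DecidableEq Q] (δ : Q → A → Q)

theorem actW_append' (q : Q) (x y : List A) :
    actW δ q (x ++ y) = actW δ (actW δ q x) y :=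
  List.foldl_append

theorem piLin_append' (x y : List A) (v : Q → ℂ) :
    piLin δ (x ++ y) v = piLin δ y (piLin δ x v) := by
  funext p
  show (∑ q ∈ Finset.univ.filter fun q => actW δ q (x ++ y) = p, v q)
      = ∑ q' ∈ Finset.univ.filter fun q' => actW δ q' y = p,
          ∑ q ∈ Finset.univ.filter fun q => actW δ q x = q', v q
  have key := Finset.sum_fiberwise (Finset.univ : Finset Q) (fun q => actW δ q x)
    (fun q => if actW δ (actW δ q x) y = p then v q else 0)
  calc (∑ q ∈ Finset.univ.filter fun q => actW δ q (x ++ y) = p, v q)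
      = ∑ q : Q, if actW δ (actW δ q x) y = p then v q else 0 := by
        rw [Finset.sum_filter]
        exact Finset.sum_congr rfl fun q _ => by rw [actW_append']
    _ = ∑ q' : Q, ∑ q ∈ Finset.univ.filter (fun q => actW δ q x = q'),
          (if actW δ (actW δ q x) y = p then v q else 0) := key.symm
    _ = ∑ q' : Q, if actW δ q' y = p
          then ∑ q ∈ Finset.univ.filter fun q => actW δ q x = q', v q else 0 := by
        refine Finset.sum_congr rfl fun q' _ => ?_
        rw [Finset.sum_congr rfl (fun q hq => by
          rw [(Finset.mem_filter.mp hq).2])]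
        split_ifs <;> simp
    _ = _ := (Finset.sum_filter _ _).symm

theorem rho_append' (x y : List A) :
    rho δ (x ++ y) = rho δ x * rho δ y := by
  unfold rho
  rw [← MulOpposite.op_mul]
  congr 1
  apply LinearMap.ext
  rintro ⟨v, hv⟩
  apply Subtype.ext
  show piLin δ (x ++ y) v = piLin δ y (piLin δ x v)
  exact piLin_append' δ x y v

theorem rhoR_append' (x y : List A) :
    rhoR δ (x ++ y) = rhoR δ x * rhoR δ y :=
  Subtype.ext (rho_append' δ x y)

theorem rho_nil' : rho δ ([] : List A) = 1 := by
  unfold rho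
  have : rhoEnd δ ([] : List A) = 1 := by
    apply LinearMap.ext
    rintro ⟨v, hv⟩
    apply Subtype.ext
    show piLin δ ([] : List A) v = v
    funext p
    show (∑ q ∈ Finset.univ.filter fun q => actW δ q ([] : List A) = p, v q) = v p
    have : (Finset.univ.filter fun q : Q => actW δ q ([] : List A) = p) = {p} := by
      ext q
      simp only [Finset.mem_filter, Finset.mem_univ, true_and, Finset.mem_singleton]
      exact Iff.rfl
    rw [this, Finset.sum_singleton]
  rw [this]
  rfl

theorem theta_append' {k : ℕ} {nn : Fin k → ℕ}
    (e : Ralg δ →ₐ[ℂ] ∀ i : Fin k, Matrix (Fin (nn i)) (Fin (nn i)) ℂ)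
    (x y : List A) (i : Fin k) :
    theta δ e (x ++ y) i = theta δ e x i * theta δ e y i := by
  unfold theta
  rw [rhoR_append', map_mul]
  rfl

theorem rhoR_reset' (r : List A) (hr : IsReset δ r) : rhoR δ r = 0 := by
  obtain ⟨q0, hq0⟩ : ∃ q0 : Q, ∀ q, actW δ q r = q0 := by
    obtain ⟨q0, h0⟩ := Finset.card_eq_one.mp hr
    refine ⟨q0, fun q => ?_⟩
    have : actW δ q r ∈ imageSet δ r := Finset.mem_image_of_mem _ (Finset.mem_univ q)
    rw [h0] at this
    exact Finset.mem_singleton.mp this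
  apply Subtype.ext
  show rho δ r = 0
  unfold rho
  rw [show (0 : (Module.End ℂ (Wperp Q))ᵐᵒᵖ) = MulOpposite.op 0 from rfl]
  congr 1
  apply LinearMap.ext
  rintro ⟨v, hv⟩
  apply Subtype.ext
  show piLin δ r v = 0
  funext p
  show (∑ q ∈ Finset.univ.filter fun q => actW δ q r = p, v q) = 0
  by_cases hp : q0 = p
  · subst hp
    have hfilt : (Finset.univ.filter fun q : Q => actW δ q r = q0) = Finset.univ := by
      ext q; simp [hq0]
    rw [hfilt]
    exact (mem_Wperp v).mp hv
  · have hfilt : (Finset.univ.filter fun q : Q => actW δ q r = p) = ∅ := by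
      ext q
      simp only [Finset.mem_filter, Finset.mem_univ, true_and, Finset.notMem_empty, iff_false]
      rw [hq0 q]
      exact hp
    rw [hfilt, Finset.sum_empty]

theorem theta_reset' {k : ℕ} {nn : Fin k → ℕ}
    (e : Ralg δ →ₐ[ℂ] ∀ i : Fin k, Matrix (Fin (nn i)) (Fin (nn i)) ℂ)
    (r : List A) (hr : IsReset δ r) (i : Fin k) :
    theta δ e r i = 0 := by
  unfold theta
  rw [rhoR_reset' δ r hr, map_zero]
  rfl

theorem imageSet_append_subset' (x y : List A) :
    imageSet δ (x ++ y) ⊆ imageSet δ y := by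
  intro p hp
  obtain ⟨q, _, hq⟩ := Finset.mem_image.mp hp
  exact Finset.mem_image.mpr ⟨actW δ q x, Finset.mem_univ _, by rw [← actW_append' δ q x y]; exact hq⟩

theorem wordRank_append_le_right' (x y : List A) :
    wordRank δ (x ++ y) ≤ wordRank δ y :=
  Finset.card_le_card (imageSet_append_subset' δ x y)

theorem wordRank_append_le_left' (x y : List A) :
    wordRank δ (x ++ y) ≤ wordRank δ x := by
  have himg : imageSet δ (x ++ y) = Finset.image (fun q => actW δ q y) (imageSet δ x) := by
    unfold imageSet
    rw [Finset.image_image]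
    apply Finset.image_congr
    intro q _
    exact actW_append' δ q x y
  rw [wordRank, himg]
  exact Finset.card_image_le

theorem mem_span_rhoR' (x : Ralg δ) :
    x ∈ Submodule.span ℂ (Set.range (rhoR δ)) := by
  classical
  -- the range of `rho` is a submonoid
  let S : Submonoid ((Module.End ℂ (Wperp Q))ᵐᵒᵖ) :=
    { carrier := Set.range (rho δ)
      one_mem' := ⟨[], rho_nil' δ⟩
      mul_mem' := by
        rintro a b ⟨s, rfl⟩ ⟨t, rfl⟩
        exact ⟨s ++ t, rho_append' δ s t⟩ }
  have hadj : (x : (Module.End ℂ (Wperp Q))ᵐᵒᵖ) ∈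
      Submodule.span ℂ (Set.range (rho δ)) := by
    have hx2 := x.2
    have : x.1 ∈ Subalgebra.toSubmodule (Algebra.adjoin ℂ (Set.range (rho δ))) := hx2
    rw [Algebra.adjoin_eq_span] at this
    have hcl : (Submonoid.closure (Set.range (rho δ)) : Set _) = Set.range (rho δ) := by
      have : Submonoid.closure (Set.range (rho δ)) = S := Submonoid.closure_eq S
      rw [this]
      rfl
    rwa [hcl] at this
  have himg : Set.range (rho δ) =
      (Subalgebra.val (Ralg δ)).toLinearMap '' Set.range (rhoR δ) := by
    ext a
    constructor
    · rintro ⟨s, rfl⟩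
      exact ⟨rhoR δ s, ⟨s, rfl⟩, rfl⟩
    · rintro ⟨b, ⟨s, rfl⟩, rfl⟩
      exact ⟨s, rfl⟩
  rw [himg, ← Submodule.map_span] at hadj
  obtain ⟨b, hb, hbx⟩ := hadj
  have : b = x := Subtype.ext hbx
  rwa [← this]

theorem mem_span_factorMonoid' {k : ℕ} {nn : Fin k → ℕ}
    (e : Ralg δ →ₐ[ℂ] ∀ i : Fin k, Matrix (Fin (nn i)) (Fin (nn i)) ℂ)
    (he_surj : Function.Surjective e) (i : Fin k)
    (m : Matrix (Fin (nn i)) (Fin (nn i)) ℂ) :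
    m ∈ Submodule.span ℂ (factorMonoid δ e i) := by
  classical
  obtain ⟨x, hx⟩ := he_surj (Function.update (0 : ∀ j : Fin k, Matrix (Fin (nn j)) (Fin (nn j)) ℂ) i m)
  have hxi : e x i = m := by rw [hx]; simp
  let L : Ralg δ →ₗ[ℂ] Matrix (Fin (nn i)) (Fin (nn i)) ℂ :=
    (LinearMap.proj i).comp e.toLinearMap
  have hmem : L x ∈ Submodule.map L (Submodule.span ℂ (Set.range (rhoR δ))) :=
    ⟨x, mem_span_rhoR' δ x, rfl⟩
  rw [Submodule.map_span] at hmem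
  have himg : L '' Set.range (rhoR δ) = factorMonoid δ e i := by
    ext a
    constructor
    · rintro ⟨b, ⟨s, rfl⟩, rfl⟩
      exact ⟨s, rfl⟩
    · rintro ⟨s, rfl⟩
      exact ⟨rhoR δ s, ⟨s, rfl⟩, rfl⟩
  rw [himg] at hmem
  have : L x = m := hxi
  rwa [this] at hmem

theorem InFactor.append_left' {v x : List A} (h : InFactor v x) (s : List A) :
    InFactor v (s ++ x) := by
  obtain ⟨a, b, rfl⟩ := h
  exact ⟨s ++ a, b, by simp⟩

theorem InFactor.append_right' {v x : List A} (h : InFactor v x) (s : List A) :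
    InFactor v (x ++ s) := by
  obtain ⟨a, b, rfl⟩ := h
  exact ⟨a, b ++ s, by simp⟩

theorem exists_sandwich' {k : ℕ} {nn : Fin k → ℕ}
    (e : Ralg δ →ₐ[ℂ] ∀ i : Fin k, Matrix (Fin (nn i)) (Fin (nn i)) ℂ)
    (he_surj : Function.Surjective e) (i : Fin k)
    (g h : Matrix (Fin (nn i)) (Fin (nn i)) ℂ) (hg0 : g ≠ 0) (hh0 : h ≠ 0) :
    ∃ s : List A, g * theta δ e s i * h ≠ 0 := by
  classical
  by_contra hc
  push_neg at hc
  have hall : ∀ a : Matrix (Fin (nn i)) (Fin (nn i)) ℂ, g * a * h = 0 := by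
    intro a
    have hmem := mem_span_factorMonoid' δ e he_surj i a
    induction hmem using Submodule.span_induction with
    | mem x hx =>
      obtain ⟨s, rfl⟩ := hx
      exact hc s
    | zero => simp
    | add x y _ _ hx hy => rw [mul_add, add_mul, hx, hy, add_zero]
    | smul c x _ hx => rw [mul_smul_comm, smul_mul_assoc, hx, smul_zero]
  obtain ⟨p, q, hpq⟩ : ∃ p q, g p q ≠ 0 := by
    by_contra hg'
    push_neg at hg'
    exact hg0 (Matrix.ext fun p q => hg' p q)
  obtain ⟨r, c, hrc⟩ : ∃ r c, h r c ≠ 0 := by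
    by_contra hh'
    push_neg at hh'
    exact hh0 (Matrix.ext fun r c => hh' r c)
  have hval := hall (Matrix.single q r 1)
  have : (g * Matrix.single q r (1 : ℂ) * h) p c = g p q * h r c := by
    rw [Matrix.mul_assoc]
    rw [Matrix.mul_apply]
    have : ∀ t, g p t * (Matrix.single q r (1 : ℂ) * h) t c
        = if t = q then g p q * h r c else 0 := by
      intro t
      by_cases ht : t = q
      · subst ht
        rw [Matrix.single_mul_apply_same, if_pos rfl, one_mul]
      · have hz : (Matrix.single q r (1 : ℂ) * h) t c = 0 := by simp [ht]
        rw [hz, mul_zero, if_neg ht]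
    rw [Finset.sum_congr rfl fun t _ => this t, Finset.sum_ite_eq' Finset.univ q
      (fun _ => g p q * h r c), if_pos (Finset.mem_univ q)]
  rw [hval] at this
  simp only [Matrix.zero_apply] at this
  rcases mul_eq_zero.mp this.symm with h1 | h1
  · exact hpq h1
  · exact hrc h1

end Stmt13Aux

theorem stmt13 {Q A : Type*} [Fintype Q] [DecidableEq Q] (δ : Q → A → Q)
    {k : ℕ} {nn : Fin k → ℕ}
    (e : Ralg δ →ₐ[ℂ] ∀ i : Fin k, Matrix (Fin (nn i)) (Fin (nn i)) ℂ)
    (he_surj : Function.Surjective e)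
    (he_ker : ∀ x : Ralg δ, e x = 0 ↔ (x : (Module.End ℂ (Wperp Q))ᵐᵒᵖ) ∈ RadSet δ)
    (Ii : ∀ i : Fin k, Set (Matrix (Fin (nn i)) (Fin (nn i)) ℂ))
    (hIi : ∀ i : Fin k, IsZeroMinimalIdeal (factorMonoid δ e i) (Ii i))
    (hIuniq : ∀ (i : Fin k) (J : Set (Matrix (Fin (nn i)) (Fin (nn i)) ℂ)),
      IsZeroMinimalIdeal (factorMonoid δ e i) J → J = Ii i)
    (hsync : IsSynchronizing δ)
    (v u : List A) (hu : IsVMinimal δ e v u) (i : Fin k) (hi : i ∈ suppW δ e u)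
    (g : Matrix (Fin (nn i)) (Fin (nn i)) ℂ) (hg : g ∈ Ii i) (hg0 : g ≠ 0)
    (w : List A) (hw : URepresents δ e u i w g) :
    wordRank δ w = rnkIdeal δ e i (Ii i) := by
  classical
  obtain ⟨hwu, hwtheta, hwminor⟩ := hw
  have hwmin : ∀ w' : List A, InFactor u w' → theta δ e w' i = g →
      wordRank δ w ≤ wordRank δ w' := hwminor.resolve_left hg0
  obtain ⟨⟨hIsub, hImul⟩, hI0, hIne, hImin⟩ := hIi i
  -- the easy inequality
  have hle1 : rnkIdeal δ e i (Ii i) ≤ wordRank δ w := by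
    have h2 : rnkElt δ e i g ≤ wordRank δ w := Nat.sInf_le ⟨w, hwtheta, rfl⟩
    have h3 : rnkIdeal δ e i (Ii i) ≤ rnkElt δ e i g := Nat.sInf_le ⟨g, hg, hg0, rfl⟩
    exact h3.trans h2
  -- pick a minimizer `hmat ∈ Ii i`
  have hSne : {m | ∃ g' ∈ Ii i, g' ≠ 0 ∧ rnkElt δ e i g' = m}.Nonempty :=
    ⟨rnkElt δ e i g, g, hg, hg0, rfl⟩
  obtain ⟨hmat, hhI, hh0, hhrnk⟩ := Nat.sInf_mem hSne
  obtain ⟨z1, hz1⟩ := hIsub hhI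
  have hTne : {m | ∃ u' : List A, theta δ e u' i = hmat ∧ wordRank δ u' = m}.Nonempty :=
    ⟨wordRank δ z1, z1, hz1, rfl⟩
  obtain ⟨z, hztheta, hzrank⟩ := Nat.sInf_mem hTne
  -- a reset word
  obtain ⟨r, hr⟩ := hsync
  -- a sandwich word
  obtain ⟨s, hs⟩ := exists_sandwich' δ e he_surj i g hmat hg0 hh0
  have hone : theta δ e ([] : List A) i = 1 := by
    unfold theta
    rw [show rhoR δ ([] : List A) = 1 from Subtype.ext (rho_nil' δ), map_one]
    rfl
  have hJtheta : ∀ x y : List A, theta δ e ((x ++ z) ++ y) i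
      = theta δ e x i * hmat * theta δ e y i := by
    intro x y
    rw [theta_append' δ e (x ++ z) y, theta_append' δ e x z, hztheta]
  -- the ideal generated by `z` and containing `u` on the left
  have hJideal : IsSetIdeal (factorMonoid δ e i)
      {m | ∃ x y : List A, InFactor u x ∧ m = theta δ e ((x ++ z) ++ y) i} := by
    constructor
    · rintro m ⟨x, y, hx, rfl⟩
      exact ⟨(x ++ z) ++ y, rfl⟩
    · rintro a ⟨sa, rfl⟩ m ⟨x, y, hx, rfl⟩
      constructor
      · refine ⟨sa ++ x, y, hx.append_left' sa, ?_⟩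
        rw [← theta_append' δ e sa ((x ++ z) ++ y)]
        congr 1
        simp
      · refine ⟨x, y ++ sa, hx, ?_⟩
        rw [← theta_append' δ e ((x ++ z) ++ y) sa]
        congr 1
        simp
  have hJ0 : (0 : Matrix (Fin (nn i)) (Fin (nn i)) ℂ) ∈
      {m | ∃ x y : List A, InFactor u x ∧ m = theta δ e ((x ++ z) ++ y) i} := by
    refine ⟨w, r, hwu, ?_⟩
    rw [hJtheta, theta_reset' δ e r hr, mul_zero]
  have hJsub : {m | ∃ x y : List A, InFactor u x ∧ m = theta δ e ((x ++ z) ++ y) i} ⊆ Ii i := by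
    rintro m ⟨x, y, hx, rfl⟩
    rw [hJtheta]
    have h1' : theta δ e x i * hmat ∈ Ii i := (hImul _ ⟨x, rfl⟩ hmat hhI).1
    exact (hImul _ ⟨y, rfl⟩ _ h1').2
  have hJne : {m | ∃ x y : List A, InFactor u x ∧ m = theta δ e ((x ++ z) ++ y) i}
      ≠ {0} := by
    intro hJeq
    have hmem : theta δ e (((w ++ s) ++ z) ++ ([] : List A)) i ∈
        {m | ∃ x y : List A, InFactor u x ∧ m = theta δ e ((x ++ z) ++ y) i} :=
      ⟨w ++ s, [], hwu.append_right' s, rfl⟩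
    rw [hJeq] at hmem
    have hzero : theta δ e (((w ++ s) ++ z) ++ ([] : List A)) i = 0 := hmem
    have hcalc : theta δ e (((w ++ s) ++ z) ++ ([] : List A)) i
        = g * theta δ e s i * hmat := by
      rw [hJtheta (w ++ s) ([] : List A), hone, mul_one, theta_append' δ e w s, hwtheta]
    rw [hcalc] at hzero
    exact hs hzero
  have hJI : {m | ∃ x y : List A, InFactor u x ∧ m = theta δ e ((x ++ z) ++ y) i}
      = Ii i := hImin _ hJideal hJ0 hJsub hJne
  have hgJ : g ∈ {m | ∃ x y : List A, InFactor u x ∧ m = theta δ e ((x ++ z) ++ y) i} := by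
    rw [hJI]; exact hg
  obtain ⟨x, y, hx, hgeq⟩ := hgJ
  have hWfac : InFactor u ((x ++ z) ++ y) := (hx.append_right' z).append_right' y
  have hle : wordRank δ w ≤ wordRank δ ((x ++ z) ++ y) := hwmin _ hWfac hgeq.symm
  have hle2 : wordRank δ ((x ++ z) ++ y) ≤ wordRank δ z :=
    (wordRank_append_le_left' δ (x ++ z) y).trans (wordRank_append_le_right' δ x z)
  have hzfin : wordRank δ z = rnkIdeal δ e i (Ii i) := by
    have h4 : wordRank δ z = rnkElt δ e i hmat := hzrank
    rw [h4]
    exact hhrnk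
  exact le_antisymm (hle.trans (hle2.trans_eq hzfin)) hle1

end
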